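/- For a nonzero proper squarefree monomial ideal I in R = k[x_1,...,x_n] over a field k, one has SP(I)^o = NP(I^∨) and NP(I) = SP(I^∨)^o. -/

import Mathlib

open Filter Pointwise MvPolynomial

noncomputable section

/-- A graded family of ideals: `a p * a q ⊆ a (p+q)` for all `p, q ≥ 1`. -/
def IsGradedFamily {R : Type*} [CommSemiring R] (a : ℕ → Ideal R) : Prop :=
  ∀ p q : ℕ, 1 ≤ p → 1 ≤ q → a p * a q ≤ a (p + q)

/-- The integral closure of an ideal `J`: elements `x` satisfying an equation
`x^m + c_1 x^{m-1} + ⋯ + c_m = 0` with `c_i ∈ J^i`. -/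
def idealIntegralClosure {R : Type*} [CommRing R] (J : Ideal R) : Set R :=
  {x | ∃ m : ℕ, 0 < m ∧ ∃ c : ℕ → R,
    (∀ i ∈ Finset.Icc 1 m, c i ∈ J ^ i) ∧
    x ^ m + ∑ i ∈ Finset.Icc 1 m, c i * x ^ (m - i) = 0}

/-- The asymptotic resurgence
`ρ̂(a_•, B_•) = sup{s/r : s,r ≥ 1, a_{st} ⊄ B_{rt} for all t ≫ 0}` (in `EReal`, so that
the supremum of the empty set is `⊥ = -∞`); the second family is a family of subsets. -/
def asymptoticResurgence {R : Type*} [CommSemiring R] (a : ℕ → Ideal R) (B : ℕ → Set R) :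
    EReal :=
  sSup {x : EReal | ∃ s r : ℕ, 1 ≤ s ∧ 1 ≤ r ∧
    (∀ᶠ t in atTop, ¬ ((a (s * t) : Set R) ⊆ B (r * t))) ∧
    x = (((s : ℝ) / (r : ℝ) : ℝ) : EReal)}

/-- Usual dot product on `ℝⁿ`. -/
def dotProd {n : ℕ} (a b : Fin n → ℝ) : ℝ := ∑ i, a i * b i

/-- The polar set `D° = {a : ⟨a,b⟩ ≥ 1 for all b ∈ D}`. -/
def polarSet {n : ℕ} (D : Set (Fin n → ℝ)) : Set (Fin n → ℝ) :=
  {a | ∀ b ∈ D, 1 ≤ dotProd a b}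

/-- `sup{λ > 0 : λ·A ⊄ B}` as an extended real (`sup ∅ = -∞`). -/
def supScaleNotSubset {n : ℕ} (A B : Set (Fin n → ℝ)) : EReal :=
  sSup {x : EReal | ∃ l : ℝ, 0 < l ∧ ¬ (l • A ⊆ B) ∧ x = ((l : ℝ) : EReal)}

variable {𝕜 : Type*} [Field 𝕜] {n : ℕ}

/-- A monomial ideal: an ideal generated by monomials. -/
def IsMonomialIdeal (I : Ideal (MvPolynomial (Fin n) 𝕜)) : Prop :=
  ∃ S : Set (Fin n →₀ ℕ), I = Ideal.span ((fun d => monomial d (1 : 𝕜)) '' S)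

/-- The Newton polyhedron `NP(I) = conv{d ∈ ℤⁿ_{≥0} : x^d ∈ I}`. -/
def newtonPolyhedron (I : Ideal (MvPolynomial (Fin n) 𝕜)) : Set (Fin n → ℝ) :=
  convexHull ℝ {x | ∃ d : Fin n →₀ ℕ, monomial d (1 : 𝕜) ∈ I ∧ x = fun i => (d i : ℝ)}

/-- The Newton–Okounkov body `Δ(a_•) = closure (⋃_{k ≥ 1} (1/k)·NP(a_k))`. -/
def noBody (a : ℕ → Ideal (MvPolynomial (Fin n) 𝕜)) : Set (Fin n → ℝ) :=
  closure (⋃ k : ℕ, ⋃ (_ : 1 ≤ k), (k : ℝ)⁻¹ • newtonPolyhedron (a k))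

/-- A squarefree monomial ideal: an ideal generated by squarefree monomials. -/
def IsSqfreeMonomialIdeal (I : Ideal (MvPolynomial (Fin n) 𝕜)) : Prop :=
  ∃ S : Set (Finset (Fin n)), I = Ideal.span ((fun s => ∏ i ∈ s, X i) '' S)

open Classical in
/-- The symbolic polyhedron
`SP(I) = ⋂_{p ∈ Ass(R/I)} {a ∈ ℝⁿ_{≥0} : Σ_{x_i ∈ p} a_i ≥ 1}`. -/
def symbolicPolyhedron (I : Ideal (MvPolynomial (Fin n) 𝕜)) : Set (Fin n → ℝ) :=
  ⋂ p ∈ associatedPrimes (MvPolynomial (Fin n) 𝕜) (MvPolynomial (Fin n) 𝕜 ⧸ I),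
    {a | (∀ i, 0 ≤ a i) ∧ 1 ≤ ∑ i : Fin n, if X i ∈ p then a i else 0}

open Classical in
/-- The Alexander dual `I^∨ = (∏_{x_i ∈ p} x_i : p ∈ Ass(R/I))`. -/
def alexanderDual (I : Ideal (MvPolynomial (Fin n) 𝕜)) : Ideal (MvPolynomial (Fin n) 𝕜) :=
  Ideal.span {f | ∃ p ∈ associatedPrimes (MvPolynomial (Fin n) 𝕜) (MvPolynomial (Fin n) 𝕜 ⧸ I),
    f = ∏ i ∈ Finset.univ.filter (fun i => X i ∈ p), X i}

/-- The `m`-th symbolic power `I^{(m)} = ⋂_{p ∈ Ass(R/I)} p^m`. -/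
def symbolicPower (I : Ideal (MvPolynomial (Fin n) 𝕜)) (m : ℕ) : Ideal (MvPolynomial (Fin n) 𝕜) :=
  ⨅ p ∈ associatedPrimes (MvPolynomial (Fin n) 𝕜) (MvPolynomial (Fin n) 𝕜 ⧸ I), p ^ m

namespace NPProof

/-- indicator finsupp of a finset -/
def ind (s : Finset (Fin n)) : Fin n →₀ ℕ := ∑ i ∈ s, Finsupp.single i 1

lemma ind_apply (s : Finset (Fin n)) (i : Fin n) :
    ind s i = if i ∈ s then 1 else 0 := by
  classical
  simp [ind, Finsupp.finset_sum_apply, Finsupp.single_apply, Finset.sum_ite_eq s i (fun _ => 1)]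

lemma ind_le_iff (s : Finset (Fin n)) (d : Fin n →₀ ℕ) :
    ind s ≤ d ↔ ∀ i ∈ s, d i ≠ 0 := by
  classical
  constructor
  · intro h i hi
    have := h i
    rw [ind_apply, if_pos hi] at this
    omega
  · intro h i
    rw [ind_apply]
    split
    · exact Nat.one_le_iff_ne_zero.2 (h i ‹_›)
    · exact Nat.zero_le _

lemma ind_mono {s t : Finset (Fin n)} (h : s ⊆ t) : ind s ≤ ind t := by
  intro i
  rw [ind_apply, ind_apply]
  by_cases hi : i ∈ s
  · simp [hi, h hi]
  · simp [hi]

/-- transversal -/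
def IsTrans (S : Set (Finset (Fin n))) (τ : Finset (Fin n)) : Prop :=
  ∀ F ∈ S, ∃ i ∈ F, i ∈ τ

def IsMinTrans (S : Set (Finset (Fin n))) (τ : Finset (Fin n)) : Prop :=
  IsTrans S τ ∧ ∀ τ' ⊆ τ, IsTrans S τ' → τ' = τ

def mT (S : Set (Finset (Fin n))) : Set (Finset (Fin n)) := {τ | IsMinTrans S τ}

def IsMinElt (S : Set (Finset (Fin n))) (F : Finset (Fin n)) : Prop :=
  F ∈ S ∧ ∀ G ∈ S, G ⊆ F → G = F

def minElts (S : Set (Finset (Fin n))) : Set (Finset (Fin n)) := {F | IsMinElt S F}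

lemma exists_minTrans_subset {S : Set (Finset (Fin n))} {τ : Finset (Fin n)}
    (h : IsTrans S τ) : ∃ σ, σ ⊆ τ ∧ IsMinTrans S σ := by
  classical
  obtain ⟨m, hm, hmin⟩ := Finset.exists_minimal
    (s := (Finset.univ : Finset (Finset (Fin n))).filter (fun τ' => τ' ⊆ τ ∧ IsTrans S τ'))
    ⟨τ, by simp [h]⟩
  simp only [Finset.mem_filter, Finset.mem_univ, true_and] at hm hmin
  refine ⟨m, hm.1, hm.2, ?_⟩
  intro τ' hτ' ht'
  by_contra hne
  exact hne (le_antisymm hτ' (hmin ⟨hτ'.trans hm.1, ht'⟩ hτ'))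

lemma exists_minElt_subset {S : Set (Finset (Fin n))} {F : Finset (Fin n)}
    (h : F ∈ S) : ∃ F', F' ⊆ F ∧ IsMinElt S F' := by
  classical
  obtain ⟨m, hm, hmin⟩ := Finset.exists_minimal
    (s := (Finset.univ : Finset (Finset (Fin n))).filter (fun G => G ∈ S ∧ G ⊆ F))
    ⟨F, by simp [h]⟩
  simp only [Finset.mem_filter, Finset.mem_univ, true_and] at hm hmin
  refine ⟨m, hm.2, hm.1, ?_⟩
  intro G hG hGm
  by_contra hne
  exact hne (le_antisymm hGm (hmin ⟨hG, hGm.trans hm.2⟩ hGm))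

lemma compl_trans {S : Set (Finset (Fin n))} {τ : Finset (Fin n)}
    (h : ∀ F ∈ S, ¬ F ⊆ τ) : IsTrans S τᶜ := by
  classical
  intro F hF
  obtain ⟨i, hiF, hiτ⟩ := Finset.not_subset.1 (h F hF)
  exact ⟨i, hiF, Finset.mem_compl.2 hiτ⟩

lemma minElt_mem_mT_mT {S : Set (Finset (Fin n))} {F : Finset (Fin n)}
    (hF : IsMinElt S F) : IsMinTrans (mT S) F := by
  classical
  constructor
  · rintro σ ⟨hσt, -⟩
    obtain ⟨i, hiF, hiσ⟩ := hσt F hF.1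
    exact ⟨i, hiσ, hiF⟩
  · intro τ hτF hτ
    by_contra hne
    -- τᶜ is a transversal of S
    have hcompl : IsTrans S τᶜ := by
      apply compl_trans
      intro G hG hGτ
      have hGF : G ⊆ F := hGτ.trans hτF
      have := hF.2 G hG hGF
      subst this
      exact hne (le_antisymm hτF hGτ)
    obtain ⟨σ, hστ, hσ⟩ := exists_minTrans_subset hcompl
    obtain ⟨i, hiσ, hiτ⟩ := hτ σ hσ
    exact (Finset.mem_compl.1 (hστ hiσ)) hiτ

lemma mT_mT_eq_minElts (S : Set (Finset (Fin n))) : mT (mT S) = minElts S := by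
  classical
  ext τ
  constructor
  · rintro ⟨hτt, hτmin⟩
    -- τ contains some element of S
    have hex : ∃ F ∈ S, F ⊆ τ := by
      by_contra hno
      push_neg at hno
      have hcompl : IsTrans S τᶜ := compl_trans hno
      obtain ⟨σ, hστ, hσ⟩ := exists_minTrans_subset hcompl
      obtain ⟨i, hiσ, hiτ⟩ := hτt σ hσ
      exact (Finset.mem_compl.1 (hστ hiσ)) hiτ
    obtain ⟨F, hFS, hFτ⟩ := hex
    obtain ⟨F', hF'F, hF'⟩ := exists_minElt_subset hFS
    have : F' = τ := hτmin F' (hF'F.trans hFτ) (minElt_mem_mT_mT hF').1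
    rw [← this]; exact hF'
  · exact minElt_mem_mT_mT


/-- the monomial ideal with exponent set V -/
def mIdealV (𝕜 : Type*) [Field 𝕜] {n : ℕ} (V : Set (Fin n →₀ ℕ)) :
    Ideal (MvPolynomial (Fin n) 𝕜) :=
  Ideal.span ((fun d => monomial d (1 : 𝕜)) '' V)

/-- squarefree monomial ideal of a family of finsets -/
def mIdeal (𝕜 : Type*) [Field 𝕜] {n : ℕ} (S : Set (Finset (Fin n))) :
    Ideal (MvPolynomial (Fin n) 𝕜) := mIdealV 𝕜 (ind '' S)

def Pvar (𝕜 : Type*) [Field 𝕜] {n : ℕ} (σ : Finset (Fin n)) :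
    Ideal (MvPolynomial (Fin n) 𝕜) :=
  mIdeal 𝕜 ((fun i => ({i} : Finset (Fin n))) '' (σ : Set (Fin n)))

lemma mem_mIdealV {V : Set (Fin n →₀ ℕ)} {f : MvPolynomial (Fin n) 𝕜} :
    f ∈ mIdealV 𝕜 V ↔ ∀ d ∈ f.support, ∃ v ∈ V, v ≤ d :=
  mem_ideal_span_monomial_image

lemma mem_mIdeal {S : Set (Finset (Fin n))} {f : MvPolynomial (Fin n) 𝕜} :
    f ∈ mIdeal 𝕜 S ↔ ∀ d ∈ f.support, ∃ F ∈ S, ∀ i ∈ F, d i ≠ 0 := by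
  rw [mIdeal, mem_mIdealV]
  refine forall₂_congr fun d hd => ?_
  constructor
  · rintro ⟨v, ⟨F, hF, rfl⟩, hle⟩
    exact ⟨F, hF, fun i hi => (ind_le_iff F d).1 hle i hi⟩
  · rintro ⟨F, hF, h⟩
    exact ⟨ind F, ⟨F, hF, rfl⟩, (ind_le_iff F d).2 h⟩

lemma mem_Pvar {σ : Finset (Fin n)} {f : MvPolynomial (Fin n) 𝕜} :
    f ∈ Pvar 𝕜 σ ↔ ∀ d ∈ f.support, ∃ i ∈ σ, d i ≠ 0 := by
  rw [Pvar, mem_mIdeal]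
  refine forall₂_congr fun d hd => ?_
  constructor
  · rintro ⟨F, ⟨i, hi, rfl⟩, h⟩
    exact ⟨i, hi, h i (Finset.mem_singleton_self i)⟩
  · rintro ⟨i, hi, h⟩
    refine ⟨{i}, ⟨i, hi, rfl⟩, ?_⟩
    intro j hj
    rw [Finset.mem_singleton] at hj
    subst hj; exact h

lemma monomial_mem_mIdeal {S : Set (Finset (Fin n))} {d : Fin n →₀ ℕ} :
    monomial d (1 : 𝕜) ∈ mIdeal 𝕜 S ↔ ∃ F ∈ S, ∀ i ∈ F, d i ≠ 0 := by
  rw [mem_mIdeal]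
  classical
  rw [support_monomial, if_neg one_ne_zero]
  simp

lemma X_mem_Pvar {σ : Finset (Fin n)} {i : Fin n} :
    (X i : MvPolynomial (Fin n) 𝕜) ∈ Pvar 𝕜 σ ↔ i ∈ σ := by
  rw [mem_Pvar, support_X]
  constructor
  · intro h
    obtain ⟨j, hj, hne⟩ := h (Finsupp.single i 1) (Finset.mem_singleton_self _)
    rw [Finsupp.single_apply] at hne
    by_cases hij : i = j
    · subst hij; exact hj
    · simp [hij] at hne
  · intro h d hd
    rw [Finset.mem_singleton] at hd
    subst hd
    exact ⟨i, h, by simp⟩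

lemma Pvar_mono {σ τ : Finset (Fin n)} (h : σ ⊆ τ) : Pvar 𝕜 σ ≤ Pvar 𝕜 τ := by
  intro f hf
  rw [mem_Pvar] at hf ⊢
  intro d hd
  obtain ⟨i, hi, hdi⟩ := hf d hd
  exact ⟨i, h hi, hdi⟩

lemma Pvar_prime (σ : Finset (Fin n)) : (Pvar 𝕜 σ).IsPrime := by
  classical
  set φ : MvPolynomial (Fin n) 𝕜 →+* MvPolynomial (Fin n) 𝕜 :=
    (aeval (fun i => if i ∈ σ then 0 else X i : Fin n → MvPolynomial (Fin n) 𝕜)).toRingHom with hφ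
  have hXσ : ∀ i ∈ σ, (X i : MvPolynomial (Fin n) 𝕜) ∈ Pvar 𝕜 σ := fun i hi => X_mem_Pvar.2 hi
  have hdiff : ∀ f : MvPolynomial (Fin n) 𝕜, f - φ f ∈ Pvar 𝕜 σ := by
    intro f
    induction f using MvPolynomial.induction_on with
    | C a => simp [hφ]
    | add p q hp hq =>
        have : p + q - φ (p + q) = (p - φ p) + (q - φ q) := by rw [map_add]; ring
        rw [this]; exact Ideal.add_mem _ hp hq
    | mul_X p i hp =>
        by_cases hi : i ∈ σ
        · have : φ (p * X i) = 0 := by simp [hφ, hi]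
          rw [this, sub_zero]
          exact Ideal.mul_mem_left _ p (hXσ i hi)
        · have : φ (p * X i) = φ p * X i := by simp [hφ, hi]
          rw [this, ← sub_mul]
          exact Ideal.mul_mem_right _ _ hp
  have hker : Pvar 𝕜 σ = RingHom.ker φ := by
    apply le_antisymm
    · rw [Pvar, mIdeal, mIdealV, Ideal.span_le]
      rintro f ⟨d, ⟨F, ⟨i, hi, rfl⟩, rfl⟩, rfl⟩
      have h1 : ind ({i} : Finset (Fin n)) = Finsupp.single i 1 := by
        simp [ind]
      rw [h1]
      show (X i : MvPolynomial (Fin n) 𝕜) ∈ RingHom.ker φ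
      rw [RingHom.mem_ker]
      simp only [hφ, AlgHom.toRingHom_eq_coe, RingHom.coe_coe, aeval_X]
      rw [if_pos (Finset.mem_coe.1 hi)]
    · intro f hf
      rw [RingHom.mem_ker] at hf
      have := hdiff f
      rwa [hf, sub_zero] at this
  rw [hker]
  exact RingHom.ker_isPrime φ


-- new material
lemma mIdeal_le_Pvar {S : Set (Finset (Fin n))} {τ : Finset (Fin n)} (h : IsTrans S τ) :
    mIdeal 𝕜 S ≤ Pvar 𝕜 τ := by
  intro f hf
  rw [mem_mIdeal] at hf
  rw [mem_Pvar]
  intro d hd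
  obtain ⟨F, hF, hall⟩ := hf d hd
  obtain ⟨i, hiF, hiτ⟩ := h F hF
  exact ⟨i, hiτ, hall i hiF⟩

lemma mem_mIdeal_of_forall_trans {S : Set (Finset (Fin n))} {f : MvPolynomial (Fin n) 𝕜}
    (h : ∀ τ, IsTrans S τ → f ∈ Pvar 𝕜 τ) : f ∈ mIdeal 𝕜 S := by
  classical
  rw [mem_mIdeal]
  intro d hd
  by_contra hno
  push_neg at hno
  set τ : Finset (Fin n) := Finset.univ.filter (fun i => d i = 0) with hτ
  have htrans : IsTrans S τ := by
    intro F hF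
    obtain ⟨i, hiF, hdi⟩ := hno F hF
    exact ⟨i, hiF, by simp [hτ, hdi]⟩
  have := (mem_Pvar.1 (h τ htrans)) d hd
  obtain ⟨i, hiτ, hdi⟩ := this
  rw [hτ, Finset.mem_filter] at hiτ
  exact hdi hiτ.2

/-- annihilator of mk f in R/I -/
lemma ann_mk_eq {I : Ideal (MvPolynomial (Fin n) 𝕜)} {f r : MvPolynomial (Fin n) 𝕜} :
    r ∈ (Submodule.span (MvPolynomial (Fin n) 𝕜)
        {(Ideal.Quotient.mk I f : MvPolynomial (Fin n) 𝕜 ⧸ I)}).annihilator ↔ r * f ∈ I := by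
  rw [Submodule.mem_annihilator_span_singleton]
  have h1 : r • (Ideal.Quotient.mk I f : MvPolynomial (Fin n) 𝕜 ⧸ I) =
      Ideal.Quotient.mk I (r * f) := by
    rw [← smul_eq_mul]
    exact (Submodule.Quotient.mk_smul I r f).symm
  rw [h1, Ideal.Quotient.eq_zero_iff_mem]

lemma ann_mk_eq' {I : Ideal (MvPolynomial (Fin n) 𝕜)} {f r : MvPolynomial (Fin n) 𝕜} :
    r ∈ (⊥ : Submodule (MvPolynomial (Fin n) 𝕜) (MvPolynomial (Fin n) 𝕜 ⧸ I)).colon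
        {Ideal.Quotient.mk I f} ↔ r * f ∈ I := by
  rw [Submodule.mem_colon_singleton, Submodule.mem_bot,
    ← Submodule.mem_annihilator_span_singleton]
  exact ann_mk_eq

lemma ass_subset {S : Set (Finset (Fin n))} {p : Ideal (MvPolynomial (Fin n) 𝕜)}
    (hp : p ∈ associatedPrimes (MvPolynomial (Fin n) 𝕜) (MvPolynomial (Fin n) 𝕜 ⧸ mIdeal 𝕜 S)) :
    ∃ σ, IsMinTrans S σ ∧ p = Pvar 𝕜 σ := by
  classical
  obtain ⟨hprime, x, hx⟩ := isAssociatedPrime_iff.1 hp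
  obtain ⟨f, rfl⟩ := Ideal.Quotient.mk_surjective x
  have hpmem : ∀ r, r ∈ p ↔ r * f ∈ mIdeal 𝕜 S := by
    intro r; rw [hx]; exact ann_mk_eq'
  set Tfin : Finset (Finset (Fin n)) :=
    Finset.univ.filter (fun τ => IsTrans S τ ∧ f ∉ Pvar 𝕜 τ) with hT
  have hpeq : p = Tfin.inf (fun τ => Pvar 𝕜 τ) := by
    apply le_antisymm
    · intro r hr
      rw [Submodule.mem_finsetInf]
      intro τ hτ
      rw [hT, Finset.mem_filter] at hτ
      have hrf : r * f ∈ mIdeal 𝕜 S := (hpmem r).1 hr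
      have hrfP : r * f ∈ Pvar 𝕜 τ := mIdeal_le_Pvar hτ.2.1 hrf
      rcases (Pvar_prime τ).mem_or_mem hrfP with h | h
      · exact h
      · exact absurd h hτ.2.2
    · intro r hr
      rw [hpmem]
      apply mem_mIdeal_of_forall_trans
      intro τ hτ
      by_cases hf : f ∈ Pvar 𝕜 τ
      · exact Ideal.mul_mem_left _ r hf
      · have hτT : τ ∈ Tfin := by simp [hT, hτ, hf]
        have hrP : r ∈ Pvar 𝕜 τ := by
          rw [Submodule.mem_finsetInf] at hr
          exact hr τ hτT
        exact Ideal.mul_mem_right _ _ hrP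
  have hle : Tfin.inf (fun τ => Pvar 𝕜 τ) ≤ p := le_of_eq hpeq.symm
  obtain ⟨τ0, hτ0T, hτ0le⟩ := (Ideal.IsPrime.inf_le' hprime).1 hle
  rw [hT, Finset.mem_filter] at hτ0T
  obtain ⟨σ, hστ0, hσ⟩ := exists_minTrans_subset hτ0T.2.1
  have hfσ : f ∉ Pvar 𝕜 σ := fun hmem => hτ0T.2.2 (Pvar_mono hστ0 hmem)
  have hσT : σ ∈ Tfin := by simp [hT, hσ.1, hfσ]
  refine ⟨σ, hσ, le_antisymm ?_ ?_⟩
  · rw [hpeq]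
    intro r hr
    rw [Submodule.mem_finsetInf] at hr
    exact hr σ hσT
  · exact le_trans (Pvar_mono hστ0) hτ0le

lemma ass_superset {S : Set (Finset (Fin n))} {σ : Finset (Fin n)} (hσ : IsMinTrans S σ) :
    Pvar 𝕜 σ ∈ associatedPrimes (MvPolynomial (Fin n) 𝕜)
      (MvPolynomial (Fin n) 𝕜 ⧸ mIdeal 𝕜 S) := by
  classical
  -- for each i ∈ σ there is F ∈ S with i ∈ F and F ∩ σ ⊆ {i}
  have hFi : ∀ i ∈ σ, ∃ F ∈ S, i ∈ F ∧ ∀ j ∈ F, j ∈ σ → j = i := by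
    intro i hi
    have hne : ¬ IsTrans S (σ.erase i) := by
      intro htr
      have heq := hσ.2 (σ.erase i) (Finset.erase_subset i σ) htr
      rw [← heq] at hi
      exact (Finset.notMem_erase i σ) hi
    rw [IsTrans] at hne
    push_neg at hne
    obtain ⟨F, hFS, hF⟩ := hne
    obtain ⟨j, hjF, hjσ⟩ := hσ.1 F hFS
    have hji : j = i := by
      by_contra hne'
      exact hF j hjF (Finset.mem_erase.2 ⟨hne', hjσ⟩)
    subst hji
    refine ⟨F, hFS, hjF, fun k hkF hkσ => ?_⟩
    by_contra hne'
    exact hF k hkF (Finset.mem_erase.2 ⟨hne', hkσ⟩)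
  set c : Fin n →₀ ℕ := ind σᶜ with hc
  have hci : ∀ i ∈ σ, c i = 0 := by
    intro i hi
    rw [hc, ind_apply, if_neg (by simp [hi])]
  have hci' : ∀ i, i ∉ σ → c i = 1 := by
    intro i hi
    rw [hc, ind_apply, if_pos (Finset.mem_compl.2 hi)]
  set f : MvPolynomial (Fin n) 𝕜 := monomial c 1 with hf
  have hsupp : ∀ r : MvPolynomial (Fin n) 𝕜, (r * f).support =
      r.support.map (addRightEmbedding c) :=
    fun r => AddMonoidAlgebra.support_coeff_mul_single r _ (by simp) _
  refine isAssociatedPrime_iff.2 ⟨Pvar_prime σ, Ideal.Quotient.mk _ f, ?_⟩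
  apply le_antisymm
  · intro r hr
    rw [ann_mk_eq']
    rw [mem_Pvar] at hr
    rw [mem_mIdeal]
    intro d' hd'
    rw [hsupp, Finset.mem_map] at hd'
    obtain ⟨d, hd, rfl⟩ := hd'
    obtain ⟨i, hiσ, hdi⟩ := hr d hd
    obtain ⟨F, hFS, hiF, hFσ⟩ := hFi i hiσ
    refine ⟨F, hFS, fun j hjF => ?_⟩
    by_cases hjσ : j ∈ σ
    · have := hFσ j hjF hjσ
      subst this
      simp only [addRightEmbedding_apply, Finsupp.add_apply]
      omega
    · simp only [addRightEmbedding_apply, Finsupp.add_apply]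
      rw [hci' j hjσ]
      omega
  · intro r hr
    rw [ann_mk_eq'] at hr
    rw [mem_Pvar]
    intro d hd
    have hd' : d + c ∈ (r * f).support := by
      rw [hsupp, Finset.mem_map]
      exact ⟨d, hd, rfl⟩
    obtain ⟨F, hFS, hall⟩ := (mem_mIdeal.1 hr) (d + c) hd'
    obtain ⟨i, hiF, hiσ⟩ := hσ.1 F hFS
    refine ⟨i, hiσ, ?_⟩
    have := hall i hiF
    rw [Finsupp.add_apply, hci i hiσ] at this
    omega


/-- real vector of a finsupp exponent -/
def eR {n : ℕ} (d : Fin n →₀ ℕ) : Fin n → ℝ := fun i => (d i : ℝ)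

lemma eR_add (d e : Fin n →₀ ℕ) : eR (d + e) = eR d + eR e := by
  funext i; simp [eR]

def cone (n : ℕ) : Set (Fin n → ℝ) := {w | ∀ i, 0 ≤ w i}

lemma cone_convex : Convex ℝ (cone n) := by
  intro x hx y hy a b ha hb _
  intro i
  simp only [Pi.add_apply, Pi.smul_apply, smul_eq_mul]
  exact add_nonneg (mul_nonneg ha (hx i)) (mul_nonneg hb (hy i))

lemma cone_isClosed : IsClosed (cone n) := by
  have : cone n = ⋂ i, (fun w : Fin n → ℝ => w i) ⁻¹' Set.Ici 0 := by
    ext w; simp [cone, Set.mem_iInter]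
  rw [this]
  exact isClosed_iInter fun i => IsClosed.preimage (continuous_apply i) isClosed_Ici

lemma dotProd_add_left (a b c : Fin n → ℝ) :
    dotProd (a + b) c = dotProd a c + dotProd b c := by
  simp [dotProd, add_mul, Finset.sum_add_distrib]

lemma dotProd_smul_left (r : ℝ) (a c : Fin n → ℝ) :
    dotProd (r • a) c = r * dotProd a c := by
  simp [dotProd, Finset.mul_sum, mul_assoc]

lemma dotProd_add_right (a b c : Fin n → ℝ) :
    dotProd a (b + c) = dotProd a b + dotProd a c := by
  simp [dotProd, mul_add, Finset.sum_add_distrib]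

lemma dotProd_smul_right (r : ℝ) (a c : Fin n → ℝ) :
    dotProd a (r • c) = r * dotProd a c := by
  simp [dotProd, Finset.mul_sum]
  ring_nf
  apply Finset.sum_congr rfl
  intros; ring

lemma dotProd_nonneg {a b : Fin n → ℝ} (ha : ∀ i, 0 ≤ a i) (hb : ∀ i, 0 ≤ b i) :
    0 ≤ dotProd a b :=
  Finset.sum_nonneg fun i _ => mul_nonneg (ha i) (hb i)

lemma dotProd_ind_left (F : Finset (Fin n)) (b : Fin n → ℝ) :
    dotProd (eR (ind F)) b = ∑ i ∈ F, b i := by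
  classical
  rw [dotProd]
  rw [show ∑ i, eR (ind F) i * b i = ∑ i : Fin n, (if i ∈ F then b i else 0) by
    apply Finset.sum_congr rfl
    intro i _
    rw [eR, ind_apply]
    split <;> simp]
  rw [Finset.sum_ite_mem, Finset.univ_inter]

lemma convex_dual_halfspace (b : Fin n → ℝ) : Convex ℝ {a : Fin n → ℝ | 1 ≤ dotProd a b} := by
  apply convex_halfSpace_ge
  exact ⟨fun x y => dotProd_add_left x y b, fun r x => dotProd_smul_left r x b⟩

/-- every nonnegative vector is in the convex hull of images of integer points -/
lemma cone_subset_hull :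
    cone n ⊆ convexHull ℝ (eR '' (Set.univ : Set (Fin n →₀ ℕ))) := by
  classical
  intro w hw
  set s : ℝ := ∑ i, w i with hs
  have hs0 : 0 ≤ s := Finset.sum_nonneg fun i _ => hw i
  set N : ℕ := ⌈s⌉₊ + 1 with hN
  have hNs : s < (N : ℝ) := by
    have := Nat.le_ceil s
    push_cast [hN]
    linarith
  have hN0 : (0 : ℝ) < N := lt_of_le_of_lt hs0 hNs
  set wt : Option (Fin n) → ℝ := fun o => Option.elim o (1 - s / N) (fun i => w i / N) with hwt
  set pt : Option (Fin n) → (Fin n → ℝ) :=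
    fun o => Option.elim o (eR 0) (fun i => eR (Finsupp.single i N)) with hpt
  have key : ∑ o : Option (Fin n), wt o • pt o = w := by
    funext j
    rw [Fintype.sum_option]
    simp only [hwt, hpt, Option.elim]
    have h0 : eR (0 : Fin n →₀ ℕ) = 0 := by funext k; simp [eR]
    rw [h0]
    simp only [Pi.add_apply, Pi.smul_apply, smul_eq_mul, Pi.zero_apply, mul_zero,
      Finset.sum_apply]
    rw [show ∑ i : Fin n, (w i / N * eR (Finsupp.single i N) j)
        = ∑ i : Fin n, (if i = j then w i / N * N else 0) by
      apply Finset.sum_congr rfl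
      intro i _
      rw [eR, Finsupp.single_apply]
      split <;> simp]
    rw [Finset.sum_ite_eq' Finset.univ j]
    simp only [Finset.mem_univ, if_pos]
    field_simp
    ring
  rw [← key]
  apply (convex_convexHull ℝ _).sum_mem
  · rintro (_ | i) _
    · simp only [hwt, Option.elim]
      have : s / N ≤ 1 := by
        rw [div_le_one hN0]; linarith
      linarith
    · simp only [hwt, Option.elim]
      exact div_nonneg (hw i) (le_of_lt hN0)
  · rw [Fintype.sum_option]
    simp only [hwt, Option.elim]
    rw [← Finset.sum_div]
    field_simp
    linarith
  · rintro (_ | i) _ <;>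
      exact subset_convexHull ℝ _ ⟨_, Set.mem_univ _, rfl⟩

/-- structure of Newton polyhedron of a monomial ideal -/
lemma NP_struct (V : Set (Fin n →₀ ℕ)) :
    newtonPolyhedron (mIdealV 𝕜 V) = convexHull ℝ (eR '' V) + cone n := by
  classical
  have hmono : ∀ d : Fin n →₀ ℕ, (monomial d (1:𝕜) ∈ mIdealV 𝕜 V ↔ ∃ v ∈ V, v ≤ d) := by
    intro d
    rw [mem_mIdealV, support_monomial, if_neg (one_ne_zero (α := 𝕜))]
    simp
  have hE : {x | ∃ d : Fin n →₀ ℕ, monomial d (1:𝕜) ∈ mIdealV 𝕜 V ∧ x = fun i => (d i : ℝ)}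
      = {x | ∃ d : Fin n →₀ ℕ, (∃ v ∈ V, v ≤ d) ∧ x = eR d} := by
    ext x
    simp only [Set.mem_setOf_eq, hmono]
    rfl
  rw [newtonPolyhedron, hE]
  apply le_antisymm
  · apply convexHull_min
    · rintro x ⟨d, ⟨v, hv, hvd⟩, rfl⟩
      have : eR d = eR v + (eR d - eR v) := by ring
      rw [this]
      apply Set.add_mem_add
      · exact subset_convexHull ℝ _ ⟨v, hv, rfl⟩
      · intro i
        simp only [Pi.sub_apply, eR, sub_nonneg]
        exact_mod_cast hvd i
    · exact ((convex_convexHull ℝ _).add cone_convex)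
  · have h1 : convexHull ℝ (eR '' V) + cone n ⊆
        convexHull ℝ (eR '' V) + convexHull ℝ (eR '' (Set.univ : Set (Fin n →₀ ℕ))) :=
      Set.add_subset_add_left cone_subset_hull
    refine h1.trans ?_
    rw [← convexHull_add]
    apply convexHull_mono
    rintro x ⟨y, ⟨v, hv, rfl⟩, z, ⟨g, -, rfl⟩, rfl⟩
    exact ⟨v + g, ⟨v, hv, le_add_of_nonneg_right zero_le⟩, (eR_add v g).symm⟩

lemma NP_isClosed {V : Set (Fin n →₀ ℕ)} (hV : V.Finite) :
    IsClosed (convexHull ℝ (eR '' V) + cone n) :=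
  IsClosed.add_left_of_isCompact cone_isClosed ((hV.image eR).isCompact_convexHull (𝕜 := ℝ))


/-- the polyhedron cut out by covering inequalites of a family -/
def Hset (𝒜 : Set (Finset (Fin n))) : Set (Fin n → ℝ) :=
  ⋂ F ∈ 𝒜, {a | (∀ i, 0 ≤ a i) ∧ 1 ≤ ∑ i ∈ F, a i}

lemma polar_Hset {𝒜 : Set (Finset (Fin n))} (h1 : 𝒜.Nonempty) (h2 : ∀ F ∈ 𝒜, F.Nonempty) :
    polarSet (Hset 𝒜) = convexHull ℝ (eR '' (ind '' 𝒜)) + cone n := by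
  classical
  set C : Set (Fin n → ℝ) := convexHull ℝ (eR '' (ind '' 𝒜)) + cone n with hC
  have hmemH : ∀ b ∈ Hset 𝒜, (∀ i, 0 ≤ b i) ∧ ∀ F ∈ 𝒜, 1 ≤ ∑ i ∈ F, b i := by
    intro b hb
    obtain ⟨F0, hF0⟩ := h1
    have h := Set.mem_iInter₂.1 hb
    exact ⟨(h F0 hF0).1, fun F hF => (h F hF).2⟩
  have hHmem : ∀ b : Fin n → ℝ, (∀ i, 0 ≤ b i) → (∀ F ∈ 𝒜, 1 ≤ ∑ i ∈ F, b i) → b ∈ Hset 𝒜 := by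
    intro b hb1 hb2
    exact Set.mem_iInter₂.2 fun F hF => ⟨hb1, hb2 F hF⟩
  apply Set.Subset.antisymm
  · -- hard direction: polar ⊆ C
    intro a ha
    by_contra hnot
    obtain ⟨f, u, hfa, hfC⟩ := geometric_hahn_banach_point_closed
      ((convex_convexHull ℝ _).add cone_convex)
      (NP_isClosed ((Set.toFinite 𝒜).image ind)) hnot
    -- represent f by the vector y
    set y : Fin n → ℝ := fun i => f (Pi.single i 1) with hy
    have hrep : ∀ z : Fin n → ℝ, f z = dotProd z y := by
      intro z
      have hz := pi_eq_sum_univ z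
      calc f z = f (∑ i, z i • fun j => if i = j then (1:ℝ) else 0) := by rw [← hz]
        _ = ∑ i, z i • f (fun j => if i = j then (1:ℝ) else 0) := by
            rw [map_sum]
            apply Finset.sum_congr rfl
            intro i _
            rw [map_smul]
        _ = dotProd z y := by
            rw [dotProd]
            apply Finset.sum_congr rfl
            intro i _
            rw [smul_eq_mul, hy]
            congr 2
            funext j
            rw [Pi.single_apply]
            simp [eq_comm]
    -- points of the hull are in C
    have hptC : ∀ F ∈ 𝒜, eR (ind F) ∈ C := by
      intro F hF
      rw [hC]
      have : eR (ind F) = eR (ind F) + 0 := by ring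
      rw [this]
      exact Set.add_mem_add (subset_convexHull ℝ _ ⟨ind F, ⟨F, hF, rfl⟩, rfl⟩)
        (fun i => le_refl 0)
    -- y is nonnegative
    have hynn : ∀ i, 0 ≤ y i := by
      intro i
      by_contra hneg
      push_neg at hneg
      obtain ⟨F0, hF0⟩ := h1
      have h1' : u < f (eR (ind F0)) := hfC _ (hptC F0 hF0)
      have hkey : ∀ μ : ℝ, 0 ≤ μ → u < f (eR (ind F0)) + μ * y i := by
        intro μ hμ0
        have hmemC : eR (ind F0) + μ • (Pi.single i 1 : Fin n → ℝ) ∈ C := by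
          rw [hC]
          refine Set.add_mem_add (subset_convexHull ℝ _ ⟨ind F0, ⟨F0, hF0, rfl⟩, rfl⟩) ?_
          intro j
          simp only [Pi.smul_apply, smul_eq_mul]
          rw [Pi.single_apply]
          split <;> simp [hμ0]
        have hval : f (eR (ind F0) + μ • (Pi.single i 1 : Fin n → ℝ))
            = f (eR (ind F0)) + μ * y i := by
          rw [map_add, map_smul, smul_eq_mul]
        have := hfC _ hmemC
        rwa [hval] at this
      have hq : 0 ≤ (u - f (eR (ind F0))) / y i := by
        rw [div_nonneg_iff]
        right
        exact ⟨by linarith, le_of_lt hneg⟩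
      have h3 := hkey ((u - f (eR (ind F0))) / y i) hq
      rw [div_mul_cancel₀ _ (ne_of_lt hneg)] at h3
      linarith
    -- f values on generators
    have hfgen : ∀ F ∈ 𝒜, u < ∑ i ∈ F, y i := by
      intro F hF
      have := hfC _ (hptC F hF)
      rwa [hrep, dotProd_ind_left] at this
    have hfa' : dotProd a y < u := by rwa [hrep] at hfa
    by_cases hu : 0 < u
    · -- scale y by 1/u
      set b : Fin n → ℝ := fun j => y j / u with hb
      have hbH : b ∈ Hset 𝒜 := by
        apply hHmem
        · intro j
          exact div_nonneg (hynn j) hu.le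
        · intro F hF
          rw [hb, ← Finset.sum_div, one_le_div hu]
          exact le_of_lt (hfgen F hF)
      have hab : dotProd a b = dotProd a y / u := by
        rw [dotProd, dotProd, Finset.sum_div]
        apply Finset.sum_congr rfl
        intro j _
        rw [hb, mul_div_assoc]
      have h4 := ha b hbH
      rw [hab] at h4
      have h5 : dotProd a y / u < 1 := (div_lt_one hu).2 hfa'
      linarith
    · -- u ≤ 0 case
      push_neg at hu
      set one : Fin n → ℝ := fun _ => 1 with hone
      have honeH : one ∈ Hset 𝒜 := by
        apply hHmem
        · intro j; rw [hone]; norm_num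
        · intro F hF
          rw [hone]
          rw [Finset.sum_const, nsmul_eq_mul, mul_one]
          exact_mod_cast Nat.one_le_iff_ne_zero.2 (Finset.card_ne_zero_of_mem (h2 F hF).choose_spec)
      have hs : 1 ≤ dotProd a one := ha one honeH
      have hday : dotProd a y < 0 := lt_of_lt_of_le hfa' hu
      set lam : ℝ := dotProd a one / (-(dotProd a y)) with hlam
      have hlam0 : 0 ≤ lam := div_nonneg (by linarith) (by linarith)
      set b : Fin n → ℝ := one + lam • y with hb
      have hbH : b ∈ Hset 𝒜 := by
        apply hHmem
        · intro j
          rw [hb]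
          simp only [Pi.add_apply, Pi.smul_apply, smul_eq_mul, hone]
          have := hynn j
          nlinarith
        · intro F hF
          rw [hb]
          simp only [Pi.add_apply, Pi.smul_apply, smul_eq_mul]
          rw [Finset.sum_add_distrib]
          have hf1 : 1 ≤ ∑ i ∈ F, one i := by
            rw [hone, Finset.sum_const, nsmul_eq_mul, mul_one]
            exact_mod_cast Nat.one_le_iff_ne_zero.2
              (Finset.card_ne_zero_of_mem (h2 F hF).choose_spec)
          have hf2 : 0 ≤ ∑ i ∈ F, lam * y i :=
            Finset.sum_nonneg fun i _ => mul_nonneg hlam0 (hynn i)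
          linarith
      have h4 := ha b hbH
      rw [hb, dotProd_add_right, dotProd_smul_right] at h4
      have hne : dotProd a y ≠ 0 := ne_of_lt hday
      have hcancel : lam * dotProd a y = -(dotProd a one) := by
        rw [hlam, div_neg, neg_mul, div_mul_cancel₀ _ hne]
      rw [hcancel] at h4
      linarith
  · -- easy direction: C ⊆ polar
    rintro x ⟨c, hc, w, hw, rfl⟩ b hb
    obtain ⟨hb1, hb2⟩ := hmemH b hb
    rw [dotProd_add_left]
    have hwb : 0 ≤ dotProd w b := dotProd_nonneg hw hb1
    have hcb : 1 ≤ dotProd c b := by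
      have : convexHull ℝ (eR '' (ind '' 𝒜)) ⊆ {a | 1 ≤ dotProd a b} := by
        apply convexHull_min
        · rintro z ⟨d, ⟨F, hF, rfl⟩, rfl⟩
          rw [Set.mem_setOf_eq, dotProd_ind_left]
          exact hb2 F hF
        · exact convex_dual_halfspace b
      exact this hc
    linarith


-- ======== new glue =========

lemma prod_X_eq (s : Finset (Fin n)) : (∏ i ∈ s, X i : MvPolynomial (Fin n) 𝕜)
    = monomial (ind s) 1 := by
  classical
  induction s using Finset.induction_on with
  | empty => simp [ind]
  | insert _ _ hnot ih =>
      next a s' =>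
        rw [Finset.prod_insert hnot, ih]
        have : ind (insert a s') = Finsupp.single a 1 + ind s' := by
          rw [ind, ind, Finset.sum_insert hnot]
        rw [this]
        rw [show (X a : MvPolynomial (Fin n) 𝕜) = monomial (Finsupp.single a 1) 1 from rfl]
        rw [monomial_mul, one_mul]

lemma sqf_eq_mIdeal (S : Set (Finset (Fin n))) :
    Ideal.span ((fun s => ∏ i ∈ s, X i : Finset (Fin n) → MvPolynomial (Fin n) 𝕜) '' S)
      = mIdeal 𝕜 S := by
  rw [mIdeal, mIdealV, ← Set.image_comp]
  congr 1
  apply Set.image_congr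
  intro s _
  exact prod_X_eq s

lemma mIdeal_mono {S T : Set (Finset (Fin n))} (h : S ⊆ T) : mIdeal 𝕜 S ≤ mIdeal 𝕜 T :=
  Ideal.span_mono (Set.image_mono (Set.image_mono h))

lemma mIdeal_minElts (S : Set (Finset (Fin n))) :
    mIdeal 𝕜 S = mIdeal 𝕜 (minElts S) := by
  apply le_antisymm
  · rw [mIdeal, mIdealV, Ideal.span_le]
    rintro f ⟨d, ⟨F, hF, rfl⟩, rfl⟩
    rw [SetLike.mem_coe]
    rw [show ((fun d => (monomial d) (1:𝕜)) (ind F)) = monomial (ind F) 1 from rfl]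
    rw [monomial_mem_mIdeal]
    obtain ⟨F', hF'F, hF'⟩ := exists_minElt_subset hF
    refine ⟨F', hF', fun i hi => ?_⟩
    rw [ind_apply, if_pos (hF'F hi)]
    exact one_ne_zero
  · exact mIdeal_mono (fun F hF => hF.1)

lemma members_nonempty {S : Set (Finset (Fin n))}
    (hI1 : mIdeal 𝕜 S ≠ ⊤) : ∀ F ∈ S, F.Nonempty := by
  intro F hF
  rw [Finset.nonempty_iff_ne_empty]
  rintro rfl
  apply hI1
  rw [Ideal.eq_top_iff_one]
  have : (1 : MvPolynomial (Fin n) 𝕜) = monomial (ind ∅) 1 := by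
    rw [show ind (∅ : Finset (Fin n)) = 0 by simp [ind]]
    simp
  rw [this, monomial_mem_mIdeal]
  exact ⟨∅, hF, by simp⟩

lemma family_nonempty {S : Set (Finset (Fin n))}
    (hI0 : mIdeal 𝕜 S ≠ ⊥) : S.Nonempty := by
  rw [Set.nonempty_iff_ne_empty]
  rintro rfl
  apply hI0
  rw [mIdeal, mIdealV]
  simp

lemma mT_nonempty {S : Set (Finset (Fin n))} (h2 : ∀ F ∈ S, F.Nonempty) :
    (mT S).Nonempty := by
  have : IsTrans S Finset.univ := by
    intro F hF
    obtain ⟨i, hi⟩ := h2 F hF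
    exact ⟨i, hi, Finset.mem_univ i⟩
  obtain ⟨σ, -, hσ⟩ := exists_minTrans_subset this
  exact ⟨σ, hσ⟩

lemma mT_members_nonempty {S : Set (Finset (Fin n))} (h1 : S.Nonempty) :
    ∀ σ ∈ mT S, σ.Nonempty := by
  rintro σ hσ
  obtain ⟨F, hF⟩ := h1
  obtain ⟨i, -, hiσ⟩ := hσ.1 F hF
  exact ⟨i, hiσ⟩

lemma minElts_nonempty {S : Set (Finset (Fin n))} (h1 : S.Nonempty) :
    (minElts S).Nonempty := by
  obtain ⟨F, hF⟩ := h1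
  obtain ⟨F', -, hF'⟩ := exists_minElt_subset hF
  exact ⟨F', hF'⟩

lemma ass_eq (S : Set (Finset (Fin n))) :
    associatedPrimes (MvPolynomial (Fin n) 𝕜) (MvPolynomial (Fin n) 𝕜 ⧸ mIdeal 𝕜 S)
      = Pvar 𝕜 '' (mT S) := by
  ext p
  constructor
  · intro hp
    obtain ⟨σ, hσ, rfl⟩ := ass_subset hp
    exact ⟨σ, hσ, rfl⟩
  · rintro ⟨σ, hσ, rfl⟩
    exact ass_superset hσ

lemma symbolic_eq_Hset (S : Set (Finset (Fin n))) :
    symbolicPolyhedron (mIdeal 𝕜 S) = Hset (mT S) := by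
  classical
  rw [symbolicPolyhedron, ass_eq, Hset]
  rw [Set.biInter_image]
  apply Set.iInter₂_congr
  intro σ hσ
  have hsums : ∀ a : Fin n → ℝ,
      (∑ i : Fin n, if X i ∈ Pvar 𝕜 σ then a i else 0) = ∑ i ∈ σ, a i := by
    intro a
    simp only [X_mem_Pvar]
    rw [Finset.sum_ite_mem, Finset.univ_inter]
  ext a
  simp only [Set.mem_setOf_eq, hsums]

open Classical in
lemma filter_X_mem (σ : Finset (Fin n)) :
    Finset.univ.filter (fun i => X i ∈ Pvar 𝕜 σ) = σ := by
  classical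
  ext i
  simp only [Finset.mem_filter, Finset.mem_univ, true_and]
  exact X_mem_Pvar

lemma alexanderDual_eq (S : Set (Finset (Fin n))) :
    alexanderDual (mIdeal 𝕜 S) = mIdeal 𝕜 (mT S) := by
  classical
  have hset : {f : MvPolynomial (Fin n) 𝕜 | ∃ p ∈ associatedPrimes (MvPolynomial (Fin n) 𝕜)
        (MvPolynomial (Fin n) 𝕜 ⧸ mIdeal 𝕜 S),
      f = ∏ i ∈ Finset.univ.filter (fun i => X i ∈ p), X i}
      = (fun d => monomial d (1:𝕜)) '' (ind '' mT S) := by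
    ext f
    simp only [Set.mem_setOf_eq, Set.mem_image]
    constructor
    · rintro ⟨p, hp, rfl⟩
      rw [ass_eq] at hp
      obtain ⟨σ, hσ, rfl⟩ := hp
      refine ⟨ind σ, ⟨σ, hσ, rfl⟩, ?_⟩
      rw [filter_X_mem, prod_X_eq]
    · rintro ⟨d, ⟨σ, hσ, rfl⟩, rfl⟩
      refine ⟨Pvar 𝕜 σ, ?_, ?_⟩
      · rw [ass_eq]; exact ⟨σ, hσ, rfl⟩
      · rw [filter_X_mem, prod_X_eq]
  rw [alexanderDual, hset]
  rfl


end NPProof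

open NPProof

/-- Remark `rmk.dual`. For a nonzero proper squarefree monomial ideal `I`,
`SP(I)° = NP(I^∨)` and `NP(I) = SP(I^∨)°`. -/
theorem polar_symbolicPolyhedron_eq_newtonPolyhedron_dual
    (I : Ideal (MvPolynomial (Fin n) 𝕜))
    (hISqf : IsSqfreeMonomialIdeal I) (hI0 : I ≠ ⊥) (hI1 : I ≠ ⊤) :
    polarSet (symbolicPolyhedron I) = newtonPolyhedron (alexanderDual I) ∧
      newtonPolyhedron I = polarSet (symbolicPolyhedron (alexanderDual I)) := by
  obtain ⟨S, rfl⟩ := hISqf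
  rw [sqf_eq_mIdeal] at *
  have hS1 : S.Nonempty := family_nonempty hI0
  have hS2 : ∀ F ∈ S, F.Nonempty := members_nonempty hI1
  have hmT1 : (mT S).Nonempty := mT_nonempty hS2
  have hmT2 : ∀ σ ∈ mT S, σ.Nonempty := mT_members_nonempty hS1
  constructor
  · rw [symbolic_eq_Hset, polar_Hset hmT1 hmT2, alexanderDual_eq]
    rw [show mIdeal 𝕜 (mT S) = mIdealV 𝕜 (ind '' mT S) from rfl, NP_struct]
  · rw [alexanderDual_eq, symbolic_eq_Hset, mT_mT_eq_minElts]
    have h1 : (minElts S).Nonempty := minElts_nonempty hS1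
    have h2 : ∀ F ∈ minElts S, F.Nonempty := fun F hF => hS2 F hF.1
    rw [polar_Hset h1 h2, mIdeal_minElts (𝕜 := 𝕜) S]
    rw [show mIdeal 𝕜 (minElts S) = mIdealV 𝕜 (ind '' minElts S) from rfl, NP_struct]


end
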